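/- arXiv:2206.05890 — 2 statements merged into one kernel-verified Lean document; each statement's English description precedes it below -/
import Mathlib

section
/- Let q be a real number with q > 0 and q ≠ 1, let k ≥ 1 and x ≥ 1 be natural numbers, and let r_1, …, r_k ≥ 1 be natural numbers. Then the q-multinomial coefficient satisfies the recurrence C_q(x; r_1,…,r_k) = q^{s_k} · C_q(x−1; r_1,…,r_k) + Σ_{j=1}^{k} q^{s_{j−1}} · C_q(x−1; r_1,…,r_{j−1}, r_j−1, r_{j+1},…,r_k), where s_j = r_1 + ⋯ + r_j and s_0 = 0. -/
noncomputable def qNum (q : ℝ) (m : ℤ) : ℝ := (1 - q ^ m) / (1 - q)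

noncomputable def qFactorial (q : ℝ) (n : ℕ) : ℝ :=
  ∏ i ∈ Finset.range n, qNum q ((i : ℤ) + 1)

noncomputable def qFacOrd (q : ℝ) (x : ℤ) (r : ℕ) : ℝ :=
  ∏ i ∈ Finset.range r, qNum q (x - (i : ℤ))

noncomputable def qMultinomial (q : ℝ) (x : ℤ) {k : ℕ} (r : Fin k → ℕ) : ℝ :=
  qFacOrd q x (∑ j, r j) / ∏ j, qFactorial q (r j)

lemma qNum_ne_zero {q : ℝ} (hq : 0 < q) (hq1 : q ≠ 1) {m : ℤ} (hm : m ≠ 0) :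
    qNum q m ≠ 0 := by
  have h1q : (1 : ℝ) - q ≠ 0 := sub_ne_zero.mpr (Ne.symm hq1)
  apply div_ne_zero _ h1q
  rw [sub_ne_zero]
  intro he
  exact hm (zpow_right_injective₀ hq hq1 (he.symm.trans (zpow_zero q).symm))

lemma qFactorial_ne_zero {q : ℝ} (hq : 0 < q) (hq1 : q ≠ 1) (n : ℕ) :
    qFactorial q n ≠ 0 := by
  apply Finset.prod_ne_zero_iff.mpr
  intro i _
  exact qNum_ne_zero hq hq1 (by omega)

lemma qFactorial_succ (q : ℝ) (n : ℕ) :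
    qFactorial q (n + 1) = qFactorial q n * qNum q ((n : ℤ) + 1) :=
  Finset.prod_range_succ _ n

lemma qFacOrd_succ (q : ℝ) (x : ℤ) (n : ℕ) :
    qFacOrd q x (n + 1) = qFacOrd q x n * qNum q (x - n) :=
  Finset.prod_range_succ _ n

lemma qFacOrd_succ_left (q : ℝ) (x : ℤ) (n : ℕ) :
    qFacOrd q x (n + 1) = qFacOrd q (x - 1) n * qNum q x := by
  unfold qFacOrd
  rw [Finset.prod_range_succ']
  congr 1
  · apply Finset.prod_congr rfl
    intro i _
    congr 1
    push_cast
    ring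
  · norm_num

lemma filter_lt_sum {k : ℕ} (r : Fin k → ℕ) (j : Fin k) :
    ∑ i ∈ Finset.univ.filter (fun i => i < j), r i
      = ∑ i ∈ Finset.range j.val, (fun i => if h : i < k then r ⟨i, h⟩ else 0) i := by
  refine Finset.sum_bij' (fun a _ => (a : ℕ))
    (fun a ha => ⟨a, lt_of_lt_of_le (Finset.mem_range.mp ha) j.2.le⟩) ?_ ?_ ?_ ?_ ?_
  · intro a ha
    rw [Finset.mem_filter] at ha
    exact Finset.mem_range.mpr ha.2
  · intro a ha
    rw [Finset.mem_filter]
    exact ⟨Finset.mem_univ _, Finset.mem_range.mp ha⟩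
  · intro a ha; simp
  · intro a ha; simp
  · intro a ha
    rw [dif_pos a.2]

lemma qNum_scalar_identity (q : ℝ) (hq : 0 < q) (hq1 : q ≠ 1)
    {k : ℕ} (x : ℕ) (hx : 1 ≤ x) (r : Fin k → ℕ) (s t : ℕ)
    (hs : s = ∑ j, r j) (hst : s = t + 1) :
    qNum q (x : ℤ) = q ^ s * qNum q ((x : ℤ) - 1 - (t : ℤ)) +
      ∑ j : Fin k,
        q ^ (∑ i ∈ Finset.univ.filter (fun i => i < j), r i) * qNum q ((r j : ℤ)) := by
  have hq0 : q ≠ 0 := ne_of_gt hq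
  have h1q : (1 : ℝ) - q ≠ 0 := sub_ne_zero.mpr (Ne.symm hq1)
  set g : ℕ → ℕ := fun i => if h : i < k then r ⟨i, h⟩ else 0 with hg
  set G : ℕ → ℕ := fun m => ∑ i ∈ Finset.range m, g i with hGdef
  have hP : ∀ j : Fin k, (∑ i ∈ Finset.univ.filter (fun i => i < j), r i) = G j.val :=
    fun j => filter_lt_sum r j
  have hGsucc : ∀ j : Fin k, G (j.val + 1) = G j.val + r j := by
    intro j
    simp only [hGdef, Finset.sum_range_succ, hg, dif_pos j.2, Fin.eta]
  have hGk : G k = s := by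
    rw [hs]
    show ∑ i ∈ Finset.range k, g i = _
    rw [← Fin.sum_univ_eq_sum_range g k]
    apply Finset.sum_congr rfl
    intro j _
    simp [hg, j.2]
  have hmix : q ^ s * q ^ ((x : ℤ) - 1 - (t : ℤ)) = q ^ x := by
    rw [← zpow_natCast q s, ← zpow_add₀ hq0, ← zpow_natCast q x]
    congr 1
    omega
  have hsum : ∑ j : Fin k,
      q ^ (∑ i ∈ Finset.univ.filter (fun i => i < j), r i) * (1 - q ^ (r j)) =
      1 - q ^ s := by
    calc ∑ j : Fin k, q ^ (∑ i ∈ Finset.univ.filter (fun i => i < j), r i) * (1 - q ^ (r j))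
        = ∑ j : Fin k, (q ^ G j.val - q ^ G (j.val + 1)) := by
          apply Finset.sum_congr rfl
          intro j _
          rw [hP j, hGsucc j, mul_one_sub, pow_add]
      _ = ∑ m ∈ Finset.range k, (q ^ G m - q ^ G (m + 1)) :=
          Fin.sum_univ_eq_sum_range (fun m => q ^ G m - q ^ G (m + 1)) k
      _ = q ^ G 0 - q ^ G k := Finset.sum_range_sub' (fun m => q ^ G m) k
      _ = 1 - q ^ s := by
          rw [hGk]
          simp [hGdef]
  have key : 1 - q ^ ((x : ℕ) : ℤ) =
      q ^ s * (1 - q ^ ((x : ℤ) - 1 - (t : ℤ))) +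
      ∑ j : Fin k,
        q ^ (∑ i ∈ Finset.univ.filter (fun i => i < j), r i) * (1 - q ^ ((r j : ℕ) : ℤ)) := by
    simp only [zpow_natCast]
    rw [hsum, mul_one_sub, hmix]
    ring
  simp only [qNum, ← mul_div_assoc, ← Finset.sum_div, ← add_div]
  rw [key]

/-- Alternative q-multinomial recurrence:
    C_q(x; r) = q^(s_k) C_q(x−1; r) + Σ_j q^(s_{j−1}) C_q(x−1; r with r_j−1),
    s_j = r_1 + ⋯ + r_j, s_0 = 0. -/
theorem qMultinomial_recurrence' (q : ℝ) (hq : 0 < q) (hq1 : q ≠ 1)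
    (k x : ℕ) (hk : 1 ≤ k) (hx : 1 ≤ x) (r : Fin k → ℕ) (hr : ∀ j, 1 ≤ r j) :
    qMultinomial q (x : ℤ) r =
      q ^ (∑ i, r i) * qMultinomial q ((x : ℤ) - 1) r +
      ∑ j : Fin k,
        q ^ (∑ i ∈ Finset.univ.filter (fun i => i < j), r i) *
          qMultinomial q ((x : ℤ) - 1) (Function.update r j (r j - 1)) := by
  have hq0 : q ≠ 0 := ne_of_gt hq
  set s : ℕ := ∑ j, r j with hs
  have hs1 : 1 ≤ s := by
    have h0 : (⟨0, hk⟩ : Fin k) ∈ (Finset.univ : Finset (Fin k)) := Finset.mem_univ _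
    calc 1 ≤ r ⟨0, hk⟩ := hr _
      _ ≤ s := Finset.single_le_sum (fun i _ => Nat.zero_le (r i)) h0
  obtain ⟨t, hst⟩ : ∃ t, s = t + 1 := ⟨s - 1, by omega⟩
  set A : ℝ := qFacOrd q ((x : ℤ) - 1) t with hA
  set D : ℝ := ∏ j, qFactorial q (r j) with hD
  have hDne : D ≠ 0 := Finset.prod_ne_zero_iff.mpr fun j _ => qFactorial_ne_zero hq hq1 _
  have ha : qMultinomial q (x : ℤ) r = qNum q (x : ℤ) * (A / D) := by
    rw [qMultinomial, ← hs, hst, qFacOrd_succ_left, ← hD, ← hA]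
    ring
  have hb : qMultinomial q ((x : ℤ) - 1) r = qNum q ((x : ℤ) - 1 - (t : ℤ)) * (A / D) := by
    rw [qMultinomial, ← hs, hst, qFacOrd_succ, ← hD, ← hA]
    ring
  have hc : ∀ j : Fin k,
      qMultinomial q ((x : ℤ) - 1) (Function.update r j (r j - 1)) =
        qNum q ((r j : ℤ)) * (A / D) := by
    intro j
    have hrj := hr j
    set W : ℕ := ∑ i ∈ Finset.univ \ {j}, r i with hW
    have hsW : s = r j + W := by
      rw [hs, hW, ← Finset.sum_eq_add_sum_sdiff_singleton_of_mem (Finset.mem_univ j)]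
    have hsum_upd : ∑ i, Function.update r j (r j - 1) i = t := by
      rw [Finset.sum_update_of_mem (Finset.mem_univ j), ← hW]
      omega
    set PW : ℝ := ∏ i ∈ Finset.univ \ {j}, qFactorial q (r i) with hPW
    have hD' : ∏ i, qFactorial q (Function.update r j (r j - 1) i) =
        qFactorial q (r j - 1) * PW := by
      rw [hPW]
      calc ∏ i, qFactorial q (Function.update r j (r j - 1) i)
          = ∏ i, Function.update (fun i => qFactorial q (r i)) j
              (qFactorial q (r j - 1)) i :=
            Finset.prod_congr rfl fun i _ =>
              Function.apply_update (fun _ n => qFactorial q n) r j (r j - 1) i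
        _ = qFactorial q (r j - 1) * ∏ i ∈ Finset.univ \ {j}, qFactorial q (r i) :=
            Finset.prod_update_of_mem (Finset.mem_univ j) _ _
    have hDsplit : D = qNum q ((r j : ℤ)) * (qFactorial q (r j - 1) * PW) := by
      rw [hD, hPW, Finset.prod_eq_mul_prod_sdiff_singleton_of_mem (Finset.mem_univ j)]
      have : qFactorial q (r j) = qFactorial q (r j - 1) * qNum q ((r j : ℤ)) := by
        conv_lhs => rw [show r j = (r j - 1) + 1 from by omega]
        rw [qFactorial_succ]
        congr 2
        omega
      rw [this]
      ring
    rw [qMultinomial, hsum_upd, hD']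
    rw [show qFacOrd q ((x : ℤ) - 1) t = A from rfl]
    rw [hDsplit]
    have hne : qNum q ((r j : ℤ)) ≠ 0 := qNum_ne_zero hq hq1 (by omega)
    rw [← mul_div_assoc, mul_div_mul_left _ _ hne]
  rw [ha, hb]
  simp only [hc]
  rw [qNum_scalar_identity q hq hq1 x hx r s t hs hst]
  rw [add_mul, Finset.sum_mul]
  simp only [mul_assoc]
end

section
/- Let q be a real number with q > 0 and q ≠ 1, let k ≥ 1 and x ≥ 1 be natural numbers, and let r_1, …, r_k ≥ 1 be natural numbers. Then the q-multinomial coefficient satisfies the recurrence C_q(x; r_1,…,r_k) = C_q(x−1; r_1,…,r_k) + Σ_{j=1}^{k} q^{x−s_j} · C_q(x−1; r_1,…,r_{j−1}, r_j−1, r_{j+1},…,r_k), where s_j = r_1 + ⋯ + r_j. -/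
lemma one_sub_q_ne_zero {q : ℝ} (hq1 : q ≠ 1) : (1 : ℝ) - q ≠ 0 :=
  sub_ne_zero.mpr (Ne.symm hq1)

lemma qNum_key (q : ℝ) (hq : 0 < q) (hq1 : q ≠ 1) (k : ℕ) (x : ℤ) (r : Fin k → ℕ) :
    qNum q x = qNum q (x - ∑ j, (r j : ℤ)) +
      ∑ j : Fin k, q ^ (x - ∑ i ∈ Finset.univ.filter (fun i => i ≤ j), (r i : ℤ)) *
        qNum q (r j) := by
  have hq0 : q ≠ 0 := hq.ne'
  have h1q : (1 : ℝ) - q ≠ 0 := one_sub_q_ne_zero hq1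
  set r' : ℕ → ℕ := fun i => if h : i < k then r ⟨i, h⟩ else 0 with hr'
  set t : ℕ → ℤ := fun n => ∑ i ∈ Finset.range n, (r' i : ℤ) with ht
  set f : ℕ → ℝ := fun n => q ^ (x - t n) with hf
  have hr'val : ∀ j : Fin k, r' j.1 = r j := by
    intro j; simp [hr', j.isLt]
  have hs : ∀ j : Fin k,
      (∑ i ∈ Finset.univ.filter (fun i => i ≤ j), (r i : ℤ)) = t (j.1 + 1) := by
    intro j
    rw [Finset.sum_filter]
    have h1 : ∀ i : Fin k, (if i ≤ j then (r i : ℤ) else 0)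
        = (fun n : ℕ => if n ≤ j.1 then (r' n : ℤ) else 0) i.1 := by
      intro i
      simp only [Fin.le_def, hr'val i]
    rw [Finset.sum_congr rfl (fun i _ => h1 i),
      Fin.sum_univ_eq_sum_range (fun n : ℕ => if n ≤ j.1 then (r' n : ℤ) else 0) k]
    have hsub : Finset.range (j.1 + 1) ⊆ Finset.range k :=
      Finset.range_subset_range.mpr j.isLt
    rw [← Finset.sum_subset hsub (fun i _ hni => by
      rw [if_neg]; simp only [Finset.mem_range] at hni; omega)]
    apply (Finset.sum_congr rfl fun i hi => ?_).symm
    rw [if_pos]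
    simp only [Finset.mem_range] at hi; omega
  have htS : t k = ∑ j, (r j : ℤ) := by
    show ∑ i ∈ Finset.range k, (r' i : ℤ) = _
    rw [← Fin.sum_univ_eq_sum_range (fun i => (r' i : ℤ)) k]
    exact Finset.sum_congr rfl fun i _ => by rw [hr'val i]
  have hstep : ∀ j : Fin k, t (j.1 + 1) = t j.1 + r j := by
    intro j
    simp only [ht, Finset.sum_range_succ, hr'val j]
  have hterm : ∀ j : Fin k,
      q ^ (x - t (j.1 + 1)) * (1 - q ^ (r j : ℤ)) = f (j.1 + 1) - f j.1 := by
    intro j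
    have hx1 : x - t j.1 = (x - t (j.1 + 1)) + (r j : ℤ) := by rw [hstep j]; ring
    simp only [hf]
    rw [hx1, zpow_add₀ hq0]
    ring
  have hsum : ∑ j : Fin k, q ^ (x - t (j.1 + 1)) * (1 - q ^ (r j : ℤ))
      = q ^ (x - t k) - q ^ x := by
    rw [Finset.sum_congr rfl fun j _ => hterm j]
    have h2 : ∀ j : Fin k, f (j.1 + 1) - f j.1 = (fun n => f (n + 1) - f n) j.1 := by
      intro j; rfl
    rw [Finset.sum_congr rfl fun j _ => h2 j,
      Fin.sum_univ_eq_sum_range (fun n => f (n + 1) - f n) k,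
      Finset.sum_range_sub f k]
    have hf0 : f 0 = q ^ x := by simp [hf, ht]
    rw [hf0]
  have hrw : ∀ j : Fin k,
      q ^ (x - ∑ i ∈ Finset.univ.filter (fun i => i ≤ j), (r i : ℤ)) * qNum q (r j)
      = q ^ (x - t (j.1 + 1)) * (1 - q ^ (r j : ℤ)) / (1 - q) := by
    intro j
    rw [hs j]
    unfold qNum
    ring
  rw [Finset.sum_congr rfl fun j _ => hrw j, ← Finset.sum_div, hsum]
  unfold qNum
  rw [← htS, ← add_div]
  congr 1
  ring

/-- Second inverted-parameter q-multinomial recurrence: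
    C_q(x; r) = C_q(x−1; r) + Σ_j q^(x−s_j) C_q(x−1; r with r_j−1),
    s_j = r_1 + ⋯ + r_j. -/
theorem qMultinomial_recurrence_inv' (q : ℝ) (hq : 0 < q) (hq1 : q ≠ 1)
    (k x : ℕ) (hk : 1 ≤ k) (hx : 1 ≤ x) (r : Fin k → ℕ) (hr : ∀ j, 1 ≤ r j) :
    qMultinomial q (x : ℤ) r =
      qMultinomial q ((x : ℤ) - 1) r +
      ∑ j : Fin k,
        q ^ ((x : ℤ) - ∑ i ∈ Finset.univ.filter (fun i => i ≤ j), (r i : ℤ)) *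
          qMultinomial q ((x : ℤ) - 1) (Function.update r j (r j - 1)) := by
  have hq0 : q ≠ 0 := hq.ne'
  have h1q : (1 : ℝ) - q ≠ 0 := one_sub_q_ne_zero hq1
  set S : ℕ := ∑ j, r j with hS
  have hSpos : 0 < S := by
    have : Nonempty (Fin k) := ⟨⟨0, hk⟩⟩
    exact Finset.sum_pos (fun j _ => hr j) Finset.univ_nonempty
  obtain ⟨S', hS'⟩ : ∃ S', S = S' + 1 := ⟨S - 1, by omega⟩
  set D : ℝ := ∏ j, qFactorial q (r j) with hD
  have hDne : D ≠ 0 :=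
    Finset.prod_ne_zero_iff.mpr fun j _ => qFactorial_ne_zero hq hq1 _
  set A : ℝ := qFacOrd q ((x : ℤ) - 1) S' with hA
  have hFx : qFacOrd q (x : ℤ) S = qNum q x * A := by
    rw [hS']
    unfold qFacOrd
    rw [Finset.prod_range_succ']
    have h1 : ∏ i ∈ Finset.range S', qNum q ((x : ℤ) - ((i + 1 : ℕ) : ℤ)) = A := by
      rw [hA]
      unfold qFacOrd
      apply Finset.prod_congr rfl
      intro i _
      congr 1
      push_cast
      ring
    rw [h1]
    norm_num [mul_comm]
  have hFx1 : qFacOrd q ((x : ℤ) - 1) S = A * qNum q ((x : ℤ) - S) := by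
    rw [hS']
    unfold qFacOrd
    rw [Finset.prod_range_succ, hA]
    unfold qFacOrd
    have h2 : qNum q ((x : ℤ) - 1 - (S' : ℤ)) = qNum q ((x : ℤ) - ((S' + 1 : ℕ) : ℤ)) := by
      congr 1
      push_cast
      ring
    rw [h2]
  have hupdate_sum : ∀ j : Fin k, (∑ i, Function.update r j (r j - 1) i) = S' := by
    intro j
    rw [Finset.sum_update_of_mem (Finset.mem_univ j)]
    have h2 : r j + ∑ i ∈ Finset.univ.erase j, r i = S :=
      Finset.add_sum_erase _ _ (Finset.mem_univ j)
    rw [Finset.sdiff_singleton_eq_erase]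
    have hj := hr j
    omega
  have hfac : ∀ j : Fin k,
      qFactorial q (r j) = qFactorial q (r j - 1) * qNum q (r j) := by
    intro j
    obtain ⟨m, hm⟩ : ∃ m, r j = m + 1 := ⟨r j - 1, by have := hr j; omega⟩
    rw [hm, qFactorial_succ]
    norm_num
  have hupdate_prod : ∀ j : Fin k,
      (∏ i, qFactorial q (Function.update r j (r j - 1) i)) * qNum q (r j) = D := by
    intro j
    rw [← Finset.mul_prod_erase Finset.univ
        (fun i => qFactorial q (Function.update r j (r j - 1) i)) (Finset.mem_univ j),
      Finset.prod_congr rfl (fun i hi => by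
        rw [Function.update_of_ne (Finset.ne_of_mem_erase hi)]),
      Function.update_self, hD,
      ← Finset.mul_prod_erase Finset.univ (fun i => qFactorial q (r i)) (Finset.mem_univ j),
      hfac j]
    ring
  have hterm : ∀ j : Fin k,
      qMultinomial q ((x : ℤ) - 1) (Function.update r j (r j - 1))
        = A * qNum q (r j) / D := by
    intro j
    unfold qMultinomial
    rw [hupdate_sum j, ← hupdate_prod j, ← hA,
      mul_div_mul_right _ _ (qNum_ne_zero hq hq1 (by have := hr j; omega))]
  have hC1 : qMultinomial q ((x : ℤ) - 1) r = A * qNum q ((x : ℤ) - S) / D := by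
    unfold qMultinomial
    rw [← hS, ← hD, hFx1]
  have hC0 : qMultinomial q (x : ℤ) r = qNum q x * A / D := by
    unfold qMultinomial
    rw [← hS, ← hD, hFx]
  have key := qNum_key q hq hq1 k x r
  have hScast : ((S : ℕ) : ℤ) = ∑ j, (r j : ℤ) := by rw [hS]; push_cast; rfl
  rw [← hScast] at key
  rw [hC0, hC1, Finset.sum_congr rfl fun j _ => by rw [hterm j]]
  calc qNum q x * A / D
      = (qNum q ((x : ℤ) - S) +
          ∑ j : Fin k, q ^ ((x : ℤ) - ∑ i ∈ Finset.univ.filter (fun i => i ≤ j), (r i : ℤ)) *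
            qNum q (r j)) * A / D := by rw [← key]
    _ = A * qNum q ((x : ℤ) - S) / D +
        ∑ j : Fin k, q ^ ((x : ℤ) - ∑ i ∈ Finset.univ.filter (fun i => i ≤ j), (r i : ℤ)) *
          (A * qNum q (r j) / D) := by
        rw [add_mul, add_div, Finset.sum_mul, Finset.sum_div]
        congr 1
        · ring
        · exact Finset.sum_congr rfl fun j _ => by ring
end
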